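/- For all reals λ > 0 and τ > 1, the integrals ∫_{λ·M^{1−τ}}^{M} (1 − y/M)^M / y dy tend to +∞ as the natural number M → ∞ (with M large enough that λ·M^{1−τ} < M). -/

import Mathlib

open Filter

/-- for `τ > 1`,
`∫_{λM^{1−τ}}^M (1 − y/M)^M / y dy → +∞` as `M → ∞`. -/
theorem tendsto_integral_atTop_of_tau_gt_one (lam τ : ℝ)
    (hlam : 0 < lam) (hτ : 1 < τ) :
    Tendsto
      (fun M : ℕ => ∫ y in (lam * (M : ℝ) ^ (1 - τ))..(M : ℝ), (1 - y / (M : ℝ)) ^ M / y)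
      atTop atTop := by
  have hlog : Tendsto (fun M : ℕ =>
      (1/2 : ℝ) * (Real.log (1/2) - Real.log lam + (τ-1) * Real.log M)) atTop atTop := by
    apply Tendsto.const_mul_atTop (by norm_num : (0:ℝ) < 1/2)
    apply tendsto_atTop_add_const_left
    exact (Real.tendsto_log_atTop.comp tendsto_natCast_atTop_atTop).const_mul_atTop (by linarith)
  apply tendsto_atTop_mono' atTop _ hlog
  have hsmall : Tendsto (fun M : ℕ => lam * (M:ℝ) ^ (1 - τ)) atTop (nhds 0) := by
    have h1 : Tendsto (fun x : ℝ => lam * x ^ (1 - τ)) atTop (nhds (lam * 0)) := by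
      apply Tendsto.const_mul
      have := tendsto_rpow_neg_atTop (by linarith : (0:ℝ) < τ - 1)
      simpa [neg_sub] using this
    simpa [Function.comp_def] using h1.comp tendsto_natCast_atTop_atTop
  have hev : ∀ᶠ M : ℕ in atTop, lam * (M:ℝ) ^ (1 - τ) ≤ 1/2 :=
    hsmall.eventually (eventually_le_nhds (by norm_num : (0:ℝ) < 1/2))
  filter_upwards [hev, eventually_ge_atTop 1] with M ha hM
  set a := lam * (M:ℝ) ^ (1 - τ) with ha_def
  have hM1 : (1:ℝ) ≤ M := by exact_mod_cast hM
  have hM0 : (0:ℝ) < M := by linarith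
  have haM : 0 < a := mul_pos hlam (Real.rpow_pos_of_pos hM0 _)
  have h2M : (1/2:ℝ) ≤ M := by linarith
  -- integrability
  have hint : ∀ p q : ℝ, 0 < p → 0 < q →
      IntervalIntegrable (fun y => (1 - y/(M:ℝ))^M / y) MeasureTheory.volume p q := by
    intro p q hp hq
    apply ContinuousOn.intervalIntegrable
    apply ContinuousOn.div
    · exact ((continuous_const.sub (continuous_id.div_const _)).pow M).continuousOn
    · exact continuousOn_id
    · intro y hy
      have : min p q ≤ y := hy.1
      have : 0 < y := lt_of_lt_of_le (lt_min hp hq) this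
      exact this.ne'
  have hint2 : IntervalIntegrable (fun y : ℝ => (1/2:ℝ)/y) MeasureTheory.volume a (1/2) := by
    apply ContinuousOn.intervalIntegrable
    apply ContinuousOn.div continuousOn_const continuousOn_id
    intro y hy
    have : min a (1/2) ≤ y := hy.1
    have : 0 < y := lt_of_lt_of_le (lt_min haM one_half_pos) this
    exact this.ne'
  have hsplit := intervalIntegral.integral_add_adjacent_intervals
    (hint a (1/2) haM one_half_pos) (hint (1/2) M one_half_pos hM0)
  have hnn : 0 ≤ ∫ y in (1/2:ℝ)..(M:ℝ), (1 - y/(M:ℝ))^M / y := by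
    apply intervalIntegral.integral_nonneg h2M
    intro y hy
    have hy0 : 0 < y := lt_of_lt_of_le one_half_pos hy.1
    have hyM : y ≤ M := hy.2
    apply div_nonneg (pow_nonneg ?_ _) hy0.le
    have : y / (M:ℝ) ≤ 1 := (div_le_one hM0).mpr hyM
    linarith
  have hmono : (∫ y in a..(1/2:ℝ), (1/2:ℝ)/y) ≤ ∫ y in a..(1/2:ℝ), (1 - y/(M:ℝ))^M / y := by
    apply intervalIntegral.integral_mono_on (by linarith : a ≤ 1/2) hint2
      (hint a (1/2) haM one_half_pos)
    intro y hy
    have hy0 : 0 < y := lt_of_lt_of_le haM hy.1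
    have hy2 : y ≤ 1/2 := hy.2
    have hb : (1:ℝ)/2 ≤ (1 - y/(M:ℝ))^M := by
      have hyy : y / (M:ℝ) ≤ y := div_le_self hy0.le hM1
      have hber := one_add_mul_le_pow (a := -(y/(M:ℝ))) (by linarith : (-2:ℝ) ≤ -(y/(M:ℝ))) M
      have hMy : (M:ℝ) * (y/(M:ℝ)) = y := by field_simp
      have h1 : 1 - y ≤ (1 - y/(M:ℝ))^M := by
        calc 1 - y = 1 + (M:ℝ) * (-(y/(M:ℝ))) := by rw [mul_neg, hMy]; ring
        _ ≤ (1 + -(y/(M:ℝ)))^M := hber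
        _ = (1 - y/(M:ℝ))^M := by rw [← sub_eq_add_neg]
      linarith
    gcongr
  have hcalc : (∫ y in a..(1/2:ℝ), (1/2:ℝ)/y) = (1/2) * Real.log ((1/2)/a) := by
    have hfeq : (fun y:ℝ => (1/2:ℝ)/y) = fun y => (1/2:ℝ) * y⁻¹ := by
      funext y; rw [div_eq_mul_inv]
    have hne : (0:ℝ) ∉ Set.uIcc a (1/2) := by
      intro h
      rcases Set.mem_uIcc.mp h with ⟨h1, _⟩ | ⟨_, h2⟩ <;> linarith
    rw [hfeq, intervalIntegral.integral_const_mul, integral_inv hne]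
  have hglog : Real.log ((1/2)/a) = Real.log (1/2) - Real.log lam - (1-τ) * Real.log M := by
    rw [Real.log_div (by norm_num) haM.ne', ha_def,
      Real.log_mul hlam.ne' (Real.rpow_pos_of_pos hM0 _).ne', Real.log_rpow hM0]
    ring
  calc (1/2 : ℝ) * (Real.log (1/2) - Real.log lam + (τ-1) * Real.log M)
      = (1/2) * Real.log ((1/2)/a) := by rw [hglog]; ring
    _ = ∫ y in a..(1/2:ℝ), (1/2:ℝ)/y := hcalc.symm
    _ ≤ ∫ y in a..(1/2:ℝ), (1 - y/(M:ℝ))^M / y := hmono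
    _ ≤ (∫ y in a..(1/2:ℝ), (1 - y/(M:ℝ))^M / y)
        + ∫ y in (1/2:ℝ)..(M:ℝ), (1 - y/(M:ℝ))^M / y := by linarith
    _ = ∫ y in a..(M:ℝ), (1 - y/(M:ℝ))^M / y := hsplit
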